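/- (Nested condensation compatibility) Let A be an n×n matrix with n ≥ 4 and let D = (d_{i,j})_{1≤i,j≤n-1} with d_{i,j} = a_{1,1}a_{i+1,j+1} − a_{1,j+1}a_{i+1,1}. Then the condensation of the leading principal (n-1)×(n-1) submatrix of A equals the leading principal (n-2)×(n-2) submatrix of D; consequently (a_{1,1})^{n-3} · det(A restricted to rows/columns 1..n-1) = det(D restricted to rows/columns 1..n-2). -/

import Mathlib

open Matrix

/-- The multiplied Chiò identity, valid over any commutative ring. -/
lemma chio_mul {R : Type*} [CommRing R] (m : ℕ)
    (B : Matrix (Fin (m + 2)) (Fin (m + 2)) R) :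
    B 0 0 * ((B 0 0) ^ m * B.det) =
      B 0 0 * Matrix.det (fun i j : Fin (m + 1) =>
        B 0 0 * B i.succ j.succ - B 0 j.succ * B i.succ 0) := by
  classical
  set a := B 0 0 with ha
  set E : Matrix (Fin (m + 2)) (Fin (m + 2)) R :=
    Matrix.of (fun i j => if i = j then (if i = 0 then 1 else a) else
      if j = 0 then -B i 0 else 0) with hE
  have hEB : ∀ i j, (E * B) i j = if i = 0 then B 0 j else a * B i j - B i 0 * B 0 j := by
    intro i j
    rw [Matrix.mul_apply]
    by_cases hi : i = 0
    · subst hi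
      rw [Finset.sum_eq_single 0]
      · simp [hE]
      · intro b _ hb; simp [hE, Ne.symm hb, hb]
      · simp
    · rw [Finset.sum_eq_add_of_mem 0 i (Finset.mem_univ _) (Finset.mem_univ _) (Ne.symm hi)]
      · simp [hE, hi]; ring
      · intro c hc1 hc2
        simp [hE, Ne.symm hc2.2, hc2.1]
  have hEdet : E.det = a ^ (m + 1) := by
    have htri : E.BlockTriangular OrderDual.toDual := by
      intro i j hij
      have hij' : (i : Fin (m + 2)) < j := hij
      have hj : j ≠ 0 := fun h => by subst h; exact absurd hij' (Fin.not_lt_zero i)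
      simp [hE, (ne_of_lt hij'), hj]
    rw [Matrix.det_of_lowerTriangular E htri]
    simp [hE, Fin.prod_univ_succ, Fin.succ_ne_zero]
  have h1 : (E * B).det = a ^ (m + 1) * B.det := by rw [Matrix.det_mul, hEdet]
  have h2 : (E * B).det = a * Matrix.det (fun i j : Fin (m + 1) =>
      a * B i.succ j.succ - B 0 j.succ * B i.succ 0) := by
    rw [Matrix.det_succ_column_zero, Fin.sum_univ_succ]
    have hz : ∀ i : Fin (m + 1), (E * B) i.succ 0 = 0 := by
      intro i; rw [hEB]; simp [Fin.succ_ne_zero, ha, mul_comm]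
    rw [Finset.sum_eq_zero (fun i _ => by rw [hz]; ring)]
    have hsub : ((E * B).submatrix (Fin.succAbove 0) Fin.succ) =
        fun i j : Fin (m + 1) => a * B i.succ j.succ - B 0 j.succ * B i.succ 0 := by
      funext i j
      simp only [Matrix.submatrix_apply, Fin.succAbove_zero]
      rw [hEB]; simp [Fin.succ_ne_zero]; ring
    rw [hsub, hEB]
    simp [ha]
  rw [← mul_assoc, ← pow_succ', ← h1, h2]

/-- The Chiò condensation identity over any commutative ring. -/
lemma chio {R : Type*} [CommRing R] (m : ℕ)
    (B : Matrix (Fin (m + 2)) (Fin (m + 2)) R) :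
    (B 0 0) ^ m * B.det =
      Matrix.det (fun i j : Fin (m + 1) =>
        B 0 0 * B i.succ j.succ - B 0 j.succ * B i.succ 0) := by
  classical
  -- generic matrix over a polynomial ring (a domain), cancel, then specialize
  let S := MvPolynomial (Fin (m + 2) × Fin (m + 2)) ℤ
  let M : Matrix (Fin (m + 2)) (Fin (m + 2)) S := fun i j => MvPolynomial.X (i, j)
  have hgen : (M 0 0) ^ m * M.det =
      Matrix.det (fun i j : Fin (m + 1) =>
        M 0 0 * M i.succ j.succ - M 0 j.succ * M i.succ 0) :=
    mul_left_cancel₀ (MvPolynomial.X_ne_zero _) (chio_mul m M)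
  let φ : S →+* R := MvPolynomial.eval₂Hom (Int.castRingHom R) (fun p => B p.1 p.2)
  have hφM : ∀ i j, φ (M i j) = B i j := by
    intro i j; exact MvPolynomial.eval₂Hom_X' _ _ _
  have := congrArg φ hgen
  have hB : (M.map ⇑φ) = B := by funext i j; exact hφM i j
  have hD : Matrix.map (fun i j : Fin (m + 1) =>
      M 0 0 * M i.succ j.succ - M 0 j.succ * M i.succ 0) ⇑φ =
      fun i j : Fin (m + 1) => B 0 0 * B i.succ j.succ - B 0 j.succ * B i.succ 0 := by
    funext i j
    change φ (M 0 0 * M i.succ j.succ - M 0 j.succ * M i.succ 0) = _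
    simp only [Matrix.map_apply, map_sub, _root_.map_mul, hφM]
  rw [_root_.map_mul, map_pow, φ.map_det, φ.map_det (M := (fun i j : Fin (m + 1) =>
      M 0 0 * M i.succ j.succ - M 0 j.succ * M i.succ 0)), RingHom.mapMatrix_apply,
    RingHom.mapMatrix_apply (M := (fun i j : Fin (m + 1) =>
      M 0 0 * M i.succ j.succ - M 0 j.succ * M i.succ 0)), hB, hD, hφM] at this
  exact this

/-- Nested condensation compatibility: condensing a leading principal submatrix equals
truncating the condensed matrix, and the condensation identity at size `n - 1`. -/
theorem chio_condensation_nested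
    {R : Type*} [CommRing R] (n : ℕ)
    (A : Matrix (Fin (n + 4)) (Fin (n + 4)) R) :
    (∀ i j : Fin (n + 2),
      (A.submatrix Fin.castSucc Fin.castSucc) 0 0 *
            (A.submatrix Fin.castSucc Fin.castSucc) i.succ j.succ -
          (A.submatrix Fin.castSucc Fin.castSucc) 0 j.succ *
            (A.submatrix Fin.castSucc Fin.castSucc) i.succ 0 =
        (fun i' j' : Fin (n + 3) =>
          A 0 0 * A i'.succ j'.succ - A 0 j'.succ * A i'.succ 0) i.castSucc j.castSucc) ∧
    (A 0 0) ^ (n + 1) * (A.submatrix Fin.castSucc Fin.castSucc).det =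
      Matrix.det fun i j : Fin (n + 2) =>
        (fun i' j' : Fin (n + 3) =>
          A 0 0 * A i'.succ j'.succ - A 0 j'.succ * A i'.succ 0) i.castSucc j.castSucc := by
  constructor
  · intro i j
    simp [Matrix.submatrix_apply, ← Fin.succ_castSucc]
  · have h := chio (n + 1) (A.submatrix Fin.castSucc Fin.castSucc)
    have e0 : (A.submatrix Fin.castSucc Fin.castSucc) 0 0 = A 0 0 := by simp
    rw [e0] at h
    rw [h]
    apply congr_arg Matrix.det
    funext i j
    simp [Matrix.submatrix_apply, ← Fin.succ_castSucc]
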